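/- Let σ(t) = 1/(1 + exp(−t)), let N > 0, γ > 0, δ > 0, T > 0, and let x : [0,T] → ℝ be differentiable with x(0) = 0 and x′(t) = exp(−Nδt/T)·(σ(γNt/T) − x(t)) for all t ∈ [0,T]. Define β(s) = (−1/(Nδ))·log(exp(−Nδ) − (Nδ/T)·log s) for s ∈ (0,1] and τ₀ = exp(−(T/(Nδ))·(1 − exp(−Nδ))). Then x(T) = ∫_{τ₀}^{1} σ(Nγ·β(τ)) dτ. -/

import Mathlib

/-- The logistic sigmoid function σ(t) = 1/(1 + exp(−t)). -/
noncomputable def logistic (t : ℝ) : ℝ := 1 / (1 + Real.exp (-t))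

lemma continuous_logistic : Continuous logistic := by
  unfold logistic
  exact continuous_const.div (continuous_const.add (Real.continuous_exp.comp continuous_neg))
    (fun t => by positivity)

/-- for the annealed dynamics x′(t) = exp(−Nδt/T)·(σ(γNt/T) − x(t))
with x(0) = 0, the final state is the integral x(T) = ∫_{τ₀}^{1} σ(Nγ·β(τ)) dτ
over the transformed annealing schedule β in natural coordinates. -/
theorem stmt_8 (N γ δ T : ℝ) (hN : 0 < N) (hγ : 0 < γ) (hδ : 0 < δ) (hT : 0 < T)
    (x : ℝ → ℝ)
    (hx0 : x 0 = 0)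
    (hode : ∀ t ∈ Set.Icc (0:ℝ) T, HasDerivAt x
      (Real.exp (-(N * δ * t / T)) * (logistic (γ * N * t / T) - x t)) t)
    (β : ℝ → ℝ)
    (hβ : ∀ s ∈ Set.Ioc (0:ℝ) 1, β s =
      (-1 / (N * δ)) * Real.log (Real.exp (-(N * δ)) - (N * δ / T) * Real.log s))
    (τ₀ : ℝ)
    (hτ₀ : τ₀ = Real.exp (-(T / (N * δ)) * (1 - Real.exp (-(N * δ))))) :
    x T = ∫ τ in τ₀..1, logistic (N * γ * β τ) := by
  set a : ℝ := N * δ with ha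
  have haT : (0:ℝ) < a := mul_pos hN hδ
  have haT' : a ≠ 0 := ne_of_gt haT
  have hT' : T ≠ 0 := ne_of_gt hT
  -- the change of variables φ
  set φ : ℝ → ℝ := fun t => Real.exp (T / a * (Real.exp (-a) - Real.exp (-(a * t / T)))) with hφ
  have hφpos : ∀ t, 0 < φ t := fun t => Real.exp_pos _
  -- some continuity facts
  have hcinner : Continuous fun t : ℝ => -(a * t / T) :=
    ((continuous_const.mul continuous_id).div_const T).neg
  have hcφ : Continuous φ := by
    apply Real.continuous_exp.comp
    exact continuous_const.mul (continuous_const.sub (Real.continuous_exp.comp hcinner))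
  have hφd : ∀ t, HasDerivAt φ (φ t * Real.exp (-(a * t / T))) t := by
    intro t
    have h0 : HasDerivAt (fun s : ℝ => a / T * s) (a / T) t := by
      simpa using (hasDerivAt_id t).const_mul (a / T)
    have h1 : HasDerivAt (fun s : ℝ => -(a * s / T)) (-(a / T)) t := by
      apply HasDerivAt.congr_of_eventuallyEq h0.neg
      filter_upwards with s
      simp only [Pi.neg_apply]; ring
    have h2 : HasDerivAt (fun t : ℝ => T / a * (Real.exp (-a) - Real.exp (-(a * t / T))))
        (Real.exp (-(a * t / T))) t := by
      have := ((h1.exp).const_sub (Real.exp (-a))).const_mul (T / a)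
      refine this.congr_deriv ?_
      field_simp
    simpa using h2.exp
  have hφ0 : φ 0 = τ₀ := by
    show Real.exp (T / a * (Real.exp (-a) - Real.exp (-(a * 0 / T)))) = τ₀
    rw [hτ₀]
    congr 1
    rw [mul_zero, zero_div, neg_zero, Real.exp_zero]
    ring
  have hφT : φ T = 1 := by
    show Real.exp (T / a * (Real.exp (-a) - Real.exp (-(a * T / T)))) = 1
    rw [mul_div_assoc, div_self hT', mul_one]
    simp
  -- bounds for φ on [0,T]
  have hφmem : ∀ t ∈ Set.Icc (0:ℝ) T, φ t ∈ Set.Icc τ₀ 1 := by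
    intro t ht
    obtain ⟨ht0, htT⟩ := ht
    constructor
    · rw [hτ₀]
      apply Real.exp_le_exp.2
      have h1 : Real.exp (-(a * t / T)) ≤ 1 := by
        apply Real.exp_le_one_iff.2
        have : 0 ≤ a * t / T := by positivity
        linarith
      have h2 : 0 ≤ T / a := by positivity
      nlinarith [Real.exp_pos (-a)]
    · apply Real.exp_le_one_iff.2
      have h1 : Real.exp (-a) ≤ Real.exp (-(a * t / T)) := by
        apply Real.exp_le_exp.2
        have : a * t / T ≤ a := by
          rw [div_le_iff₀ hT]
          nlinarith
        linarith
      have h2 : 0 ≤ T / a := by positivity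
      nlinarith
  -- β ∘ φ = t / T on [0, T]
  have hβφ : ∀ t ∈ Set.Icc (0:ℝ) T, β (φ t) = t / T := by
    intro t ht
    have hmem : φ t ∈ Set.Ioc (0:ℝ) 1 := ⟨hφpos t, (hφmem t ht).2⟩
    rw [hβ _ hmem]
    have hlog : Real.log (φ t) = T / a * (Real.exp (-a) - Real.exp (-(a * t / T))) :=
      Real.log_exp _
    rw [hlog]
    have : Real.exp (-a) - a / T * (T / a * (Real.exp (-a) - Real.exp (-(a * t / T))))
        = Real.exp (-(a * t / T)) := by
      field_simp
      ring
    rw [this, Real.log_exp]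
    field_simp
  -- Step A: FTC for (x * φ)
  have hderivF : ∀ t ∈ Set.uIcc (0:ℝ) T, HasDerivAt (fun t => x t * φ t)
      (logistic (γ * N * t / T) * (φ t * Real.exp (-(a * t / T)))) t := by
    intro t ht
    rw [Set.uIcc_of_le (le_of_lt hT)] at ht
    have := (hode t ht).mul (hφd t)
    refine this.congr_deriv ?_
    ring
  have hcont1 : Continuous fun t => logistic (γ * N * t / T) * (φ t * Real.exp (-(a * t / T))) :=
    (continuous_logistic.comp ((continuous_const.mul continuous_id).div_const T)).mul
      (hcφ.mul (Real.continuous_exp.comp hcinner))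
  have hA : x T * φ T - x 0 * φ 0 =
      ∫ t in (0:ℝ)..T, logistic (γ * N * t / T) * (φ t * Real.exp (-(a * t / T))) :=
    (intervalIntegral.integral_eq_sub_of_hasDerivAt hderivF (hcont1.intervalIntegrable _ _)).symm
  rw [hφT, hφ0, hx0, mul_one, zero_mul, sub_zero] at hA
  -- Step B: change of variables in the RHS integral
  set g : ℝ → ℝ := fun τ => logistic (N * γ * β τ) with hg
  have hgcont : ContinuousOn g (φ '' Set.uIcc (0:ℝ) T) := by
    have hsub : φ '' Set.uIcc (0:ℝ) T ⊆ Set.Icc τ₀ 1 := by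
      rintro _ ⟨t, ht, rfl⟩
      rw [Set.uIcc_of_le (le_of_lt hT)] at ht
      exact hφmem t ht
    apply ContinuousOn.mono _ hsub
    have hτ₀pos : 0 < τ₀ := by rw [hτ₀]; exact Real.exp_pos _
    have hcongr : ∀ τ ∈ Set.Icc τ₀ 1, g τ =
        logistic (N * γ * (-1 / a * Real.log (Real.exp (-a) - a / T * Real.log τ))) := by
      intro τ hτ
      rw [hg]
      simp only
      rw [hβ τ ⟨lt_of_lt_of_le hτ₀pos hτ.1, hτ.2⟩]
    apply ContinuousOn.congr _ hcongr
    apply continuous_logistic.comp_continuousOn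
    apply ContinuousOn.mul continuousOn_const
    apply ContinuousOn.mul continuousOn_const
    apply ContinuousOn.log
    · apply ContinuousOn.sub continuousOn_const
      apply ContinuousOn.mul continuousOn_const
      apply ContinuousOn.log continuousOn_id
      intro τ hτ
      exact ne_of_gt (lt_of_lt_of_le hτ₀pos hτ.1)
    · intro τ hτ
      have hlogτ : Real.log τ ≤ 0 := Real.log_nonpos (le_of_lt (lt_of_lt_of_le hτ₀pos hτ.1)) hτ.2
      have h1 : 0 ≤ a / T := by positivity
      have := Real.exp_pos (-a)
      nlinarith
  have hB : (∫ t in (0:ℝ)..T, (φ t * Real.exp (-(a * t / T))) • (g ∘ φ) t)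
      = ∫ τ in (φ 0)..(φ T), g τ := by
    apply intervalIntegral.integral_comp_smul_deriv' (fun t _ => hφd t) _ hgcont
    exact (hcφ.mul (Real.continuous_exp.comp hcinner)).continuousOn
  rw [hφ0, hφT] at hB
  rw [hg] at hB
  rw [← hB, hA]
  apply intervalIntegral.integral_congr
  intro t ht
  rw [Set.uIcc_of_le (le_of_lt hT)] at ht
  simp only [Function.comp, smul_eq_mul]
  rw [hβφ t ht]
  have : N * γ * (t / T) = γ * N * t / T := by ring
  rw [this]
  ring
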